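/- Let s be an odd prime power, F = GF(s), C₀ the nonzero squares, C₁ the nonzero non-squares, and δ ∈ C₁. If (s-1)/2 is odd, then δ - 1 and 1 - δ⁻¹ lie in different cosets of C₀ in F* (whenever both are nonzero), so the multiset (δ-1)C₀ ⊔ (1-δ⁻¹)C₀ covers every element of F* exactly once. -/

import Mathlib

private lemma mul_nonsquare_iff {F : Type*} [Field F] [Fintype F] [DecidableEq F]
    (hchar : ringChar F ≠ 2) {a b : F} (ha : ¬ IsSquare a) (hb : b ≠ 0) :
    IsSquare (a * b) ↔ ¬ IsSquare b := by
  have ha0 : a ≠ 0 := fun h => ha (h ▸ ⟨0, by simp⟩)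
  have hab : a * b ≠ 0 := mul_ne_zero ha0 hb
  have hqa : quadraticChar F a = -1 := quadraticChar_neg_one_iff_not_isSquare.mpr ha
  have hmul : quadraticChar F (a * b) = - quadraticChar F b := by
    rw [map_mul, hqa]; ring
  constructor
  · intro hsq hbs
    have h1 : quadraticChar F (a * b) = 1 := (quadraticChar_one_iff_isSquare hab).mpr hsq
    have h2 : quadraticChar F b = 1 := (quadraticChar_one_iff_isSquare hb).mpr hbs
    rw [hmul, h2] at h1; norm_num at h1
  · intro hbs
    have h2 : quadraticChar F b = -1 := quadraticChar_neg_one_iff_not_isSquare.mpr hbs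
    refine (quadraticChar_one_iff_isSquare hab).mp ?_
    rw [hmul, h2]; ring

/-- if `(s-1)/2` is odd and `δ` is a nonzero non-square, then `δ - 1` and
`1 - δ⁻¹` lie in different cosets of the squares `C₀` in `F*`, so the multiset
`(δ-1)C₀ ⊔ (1-δ⁻¹)C₀` covers every element of `F*` exactly once. -/
theorem stmt5 (F : Type*) [Field F] [Fintype F]
    (hodd : Odd (Fintype.card F)) (htodd : ¬ Even ((Fintype.card F - 1) / 2))
    (C0 : Set F) (hC0 : C0 = {x : F | x ≠ 0 ∧ IsSquare x})
    (δ : F) (hδ0 : δ ≠ 0) (hδ : ¬ IsSquare δ) :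
    (δ - 1 ≠ 0 → 1 - δ⁻¹ ≠ 0 → ¬ (IsSquare (δ - 1) ↔ IsSquare (1 - δ⁻¹)))
    ∧ ∀ u : F, u ≠ 0 →
      {x : F | x ∈ C0 ∧ (δ - 1) * x = u}.ncard
        + {y : F | y ∈ C0 ∧ (1 - δ⁻¹) * y = u}.ncard = 1 := by
  classical
  have hchar : ringChar F ≠ 2 := by
    intro h
    have := FiniteField.even_card_of_char_two h
    rcases hodd with ⟨k, hk⟩
    omega
  have hδ1 : δ ≠ 1 := fun h => hδ (h ▸ IsSquare.one)
  have hd1 : δ - 1 ≠ 0 := sub_ne_zero.mpr hδ1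
  have hinv : δ⁻¹ ≠ 1 := fun h => hδ1 (by
    have := congrArg (· * δ) h
    simpa [inv_mul_cancel₀ hδ0, eq_comm] using this)
  have hd2 : (1 : F) - δ⁻¹ ≠ 0 := sub_ne_zero.mpr (fun h => hinv h.symm)
  have hδinv : ¬ IsSquare δ⁻¹ := by
    intro ⟨r, hr⟩
    exact hδ ⟨r⁻¹, by rw [← mul_inv, ← hr, inv_inv]⟩
  have key : (1 : F) - δ⁻¹ = δ⁻¹ * (δ - 1) := by
    field_simp
  have hiff : ∀ (hne : δ - 1 ≠ 0), ¬ (IsSquare (δ - 1) ↔ IsSquare (1 - δ⁻¹)) := by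
    intro hne h
    have := (mul_nonsquare_iff hchar hδinv hne).symm
    rw [← key] at this
    tauto
  refine ⟨fun h _ => hiff h, ?_⟩
  intro u hu
  -- each set is either a singleton or empty
  have hset : ∀ a : F, a ≠ 0 →
      {x : F | x ∈ C0 ∧ a * x = u} = if IsSquare (a⁻¹ * u) then {a⁻¹ * u} else ∅ := by
    intro a ha
    ext x
    subst hC0
    constructor
    · rintro ⟨⟨hx0, hxsq⟩, hax⟩
      have hxval : x = a⁻¹ * u := by rw [← hax, inv_mul_cancel_left₀ ha]
      rw [if_pos (hxval ▸ hxsq)]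
      simpa using hxval
    · intro hx
      by_cases hsq : IsSquare (a⁻¹ * u)
      · rw [if_pos hsq] at hx
        simp only [Set.mem_singleton_iff] at hx
        subst hx
        refine ⟨⟨by simp [ha, hu], hsq⟩, by rw [mul_inv_cancel_left₀ ha]⟩
      · rw [if_neg hsq] at hx; exact absurd hx (Set.notMem_empty x)
  rw [hset _ hd1, hset _ hd2]
  -- exactly one of the two is a square
  have hrel : (1 - δ⁻¹)⁻¹ * u = δ * ((δ - 1)⁻¹ * u) := by
    rw [key]; field_simp
  have hne1 : (δ - 1)⁻¹ * u ≠ 0 := mul_ne_zero (inv_ne_zero hd1) hu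
  have hxor : IsSquare ((1 - δ⁻¹)⁻¹ * u) ↔ ¬ IsSquare ((δ - 1)⁻¹ * u) := by
    rw [hrel]; exact mul_nonsquare_iff hchar hδ hne1
  by_cases h1 : IsSquare ((δ - 1)⁻¹ * u)
  · rw [if_pos h1, if_neg (by tauto)]
    simp
  · rw [if_neg h1, if_pos (hxor.mpr h1)]
    simp
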